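/- Let L be a loopback automaton over A and S and let s := ⟦N⟧ be the converging behavior of its unroll N (s is proper since N is normalized). Then the converging behavior of L equals the star of s: for every finite word w, ⟦L⟧(w) = s*(w). -/

import Mathlib

open scoped Classical

/-- A weighted automaton over alphabet `A` and semiring `S`: a finite set of
states `Q`, initial distribution `I`, final distribution `F`, and a transition
matrix `M a` for each letter `a`. -/
structure WA (A : Type) (S : Type) [Semiring S] where
  Q : Type
  [fin : Fintype Q]
  [deq : DecidableEq Q]
  I : Q → S
  F : Q → S
  M : A → Matrix Q Q S

attribute [instance] WA.fin WA.deq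

variable {A S : Type} [Semiring S]

/-- The product `M(a₀)·…·M(a_{n−1})` over a finite word (identity for `[]`). -/
def Mword (𝒜 : WA A S) (w : List A) : Matrix 𝒜.Q 𝒜.Q S :=
  (w.map 𝒜.M).prod

/-- The converging behavior `⟦𝒜⟧(w) = Σ_{i,f} I(i)·M(w)_{i,f}·F(f)`. -/
def convB (𝒜 : WA A S) (w : List A) : S :=
  ∑ i, ∑ f, 𝒜.I i * Mword 𝒜 w i f * 𝒜.F f

/-- The first `n` letters of an infinite word. -/
def wpre (w : ℕ → A) (n : ℕ) : List A := (List.range n).map w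

/-- A pair of states `(i,f)` is activated by the infinite word `w` if for
every `n₀` there is `n ≥ n₀` with `M(w[0..n))_{i,f} ≠ 0`. -/
def Activated (𝒜 : WA A S) (w : ℕ → A) (i f : 𝒜.Q) : Prop :=
  ∀ n₀ : ℕ, ∃ n, n₀ ≤ n ∧ Mword 𝒜 (wpre w n) i f ≠ 0

/-- The diverging behavior `𝒜(w,n) = Σ_{(i,f) activated} I(i)·M(w[0..n))_{i,f}·F(f)`. -/
noncomputable def divB (𝒜 : WA A S) (w : ℕ → A) (n : ℕ) : S :=
  ∑ p : 𝒜.Q × 𝒜.Q,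
    if Activated 𝒜 w p.1 p.2 then
      𝒜.I p.1 * Mword 𝒜 (wpre w n) p.1 p.2 * 𝒜.F p.2
    else 0

/-- Product of converging power series: sum over all splittings of the word. -/
def cmul (x y : List A → S) : List A → S :=
  fun w => ∑ k ∈ Finset.range (w.length + 1), x (w.take k) * y (w.drop k)

/-- The multiplicative unit: 1 on the empty word, 0 elsewhere. -/
def cone : List A → S := fun w => match w with | [] => 1 | _ => 0

/-- Powers of a converging power series. -/
def cpow (x : List A → S) : ℕ → (List A → S)
  | 0 => cone
  | n + 1 => cmul x (cpow x n)

/-- The star `x* = Σ_{k ≥ 0} x^k`; for proper `x` only the terms with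
`k ≤ |w|` can contribute on the word `w`. -/
def cstar (x : List A → S) : List A → S :=
  fun w => ∑ k ∈ Finset.range (w.length + 1), cpow x k w

/-- `Rat*(S,A)`: the smallest set of converging power series containing all
finitely supported ones and closed under sum, product, and star of proper
members. -/
inductive IsRat : (List A → S) → Prop
  | finite (x : List A → S) (h : (Function.support x).Finite) : IsRat x
  | add {x y : List A → S} : IsRat x → IsRat y → IsRat (x + y)
  | mul {x y : List A → S} : IsRat x → IsRat y → IsRat (cmul x y)
  | star {x : List A → S} : IsRat x → x [] = 0 → IsRat (cstar x)

/-- `χ(w,x) = 1` iff arbitrarily long prefixes of `w` have nonzero coefficient. -/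
noncomputable def chi (w : ℕ → A) (x : List A → S) : S :=
  if ∀ n₀ : ℕ, ∃ n, n₀ ≤ n ∧ x (wpre w n) ≠ 0 then 1 else 0

/-- `s^ω(w,n) = s*(w[0..n))·χ(w,s*)`. -/
noncomputable def omegaPS (s : List A → S) : (ℕ → A) → ℕ → S :=
  fun w n => cstar s (wpre w n) * chi w (cstar s)

/-- The conjoin `(x ⋆ y)(w,n) = (x·y*)(w[0..n))·χ(w,x·y*)`. -/
noncomputable def conjoinPS (x y : List A → S) : (ℕ → A) → ℕ → S :=
  fun w n => cmul x (cstar y) (wpre w n) * chi w (cmul x (cstar y))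

/-- `Rat^ω(S,A)`: the smallest set of diverging power series closed under
finite sums and left/right scalar multiplication containing all `x ⋆ y` and
`z^ω` for proper rational `x`, `y`, `z`. -/
inductive IsRatOmega : ((ℕ → A) → ℕ → S) → Prop
  | zero : IsRatOmega (fun _ _ => 0)
  | add {p q : (ℕ → A) → ℕ → S} :
      IsRatOmega p → IsRatOmega q → IsRatOmega (fun w n => p w n + q w n)
  | smul_left (s : S) {p : (ℕ → A) → ℕ → S} :
      IsRatOmega p → IsRatOmega (fun w n => s * p w n)
  | smul_right (s : S) {p : (ℕ → A) → ℕ → S} :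
      IsRatOmega p → IsRatOmega (fun w n => p w n * s)
  | conjoin {x y : List A → S} :
      IsRat x → x [] = 0 → IsRat y → y [] = 0 → IsRatOmega (conjoinPS x y)
  | omega {z : List A → S} : IsRat z → z [] = 0 → IsRatOmega (omegaPS z)

/-- Scalar multiples `l·𝒜·r` of an automaton. -/
def smulWA (l : S) (𝒜 : WA A S) (r : S) : WA A S where
  Q := 𝒜.Q
  I := fun i => l * 𝒜.I i
  F := fun f => 𝒜.F f * r
  M := 𝒜.M

/-- The disjoint-union (sum) automaton. -/
def addWA (𝒜 ℬ : WA A S) : WA A S where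
  Q := 𝒜.Q ⊕ ℬ.Q
  I := Sum.elim 𝒜.I ℬ.I
  F := Sum.elim 𝒜.F ℬ.F
  M := fun a => Matrix.fromBlocks (𝒜.M a) 0 0 (ℬ.M a)

/-- `𝒜` is normalized with initial state `qI` and final state `qF`. -/
def IsNormalizedAt (𝒜 : WA A S) (qI qF : 𝒜.Q) : Prop :=
  qI ≠ qF ∧ (∀ i, 𝒜.I i = if i = qI then 1 else 0) ∧
    (∀ f, 𝒜.F f = if f = qF then 1 else 0) ∧
    (∀ (a : A) (i : 𝒜.Q), 𝒜.M a i qI = 0) ∧ (∀ (a : A) (j : 𝒜.Q), 𝒜.M a qF j = 0)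

/-- `𝒜` is normalized. -/
def IsNormalized (𝒜 : WA A S) : Prop := ∃ qI qF, IsNormalizedAt 𝒜 qI qF

/-- `𝒜` is a loopback automaton with loopback state `q₀`. -/
def IsLoopbackAt (𝒜 : WA A S) (q₀ : 𝒜.Q) : Prop :=
  (∀ i, 𝒜.I i = if i = q₀ then 1 else 0) ∧ (∀ f, 𝒜.F f = if f = q₀ then 1 else 0)

/-- `𝒜` is a loopback automaton. -/
def IsLoopback (𝒜 : WA A S) : Prop := ∃ q₀, IsLoopbackAt 𝒜 q₀

/-- `𝒜` is a loopback automaton with prelude. -/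
def IsLoopbackWithPrelude (𝒜 : WA A S) : Prop :=
  ∃ qI qF, qI ≠ qF ∧ (∀ i, 𝒜.I i = if i = qI then 1 else 0) ∧
    (∀ f, 𝒜.F f = if f = qF then 1 else 0) ∧
    (∀ (a : A) (i : 𝒜.Q), 𝒜.M a i qI = 0)

/-- `𝒜` is a bridge automaton. -/
def IsBridge (𝒜 : WA A S) : Prop :=
  ∃ qI qF, qI ≠ qF ∧ (∀ i, 𝒜.I i = if i = qI then 1 else 0) ∧
    (∀ f, 𝒜.F f = if f = qF then 1 else 0)

/-- The unroll of a loopback automaton with loopback state `q₀`: adjoin a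
fresh final state, redirect all edges ending at `q₀` to it. -/
def unroll (L : WA A S) (q₀ : L.Q) : WA A S where
  Q := L.Q ⊕ Unit
  I := Sum.elim (fun i => if i = q₀ then 1 else 0) (fun _ => 0)
  F := Sum.elim (fun _ => 0) (fun _ => 1)
  M := fun a => Matrix.of fun p q =>
    match p, q with
    | Sum.inl i, Sum.inl j => if j = q₀ then 0 else L.M a i j
    | Sum.inl i, Sum.inr _ => L.M a i q₀
    | Sum.inr _, _ => 0

/-- The conjoin `X ⋆ Y` of two normalized automata (initial/final states
`xI`, `xF` and `yI`, `yF`): the disjoint sum of `X` minus its final state and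
the roll of `Y`, with edges of `X` ending at `xF` redirected to the loopback
state `yI`. -/
def conjoinWA (X : WA A S) (xI xF : X.Q) (Y : WA A S) (yI yF : Y.Q) : WA A S where
  Q := {i : X.Q // i ≠ xF} ⊕ {j : Y.Q // j ≠ yF}
  I := Sum.elim (fun i => if i.1 = xI then 1 else 0) (fun _ => 0)
  F := Sum.elim (fun _ => 0) (fun j => if j.1 = yI then 1 else 0)
  M := fun a => Matrix.of fun p q =>
    match p, q with
    | Sum.inl i, Sum.inl j => X.M a i.1 j.1
    | Sum.inl i, Sum.inr j => if j.1 = yI then X.M a i.1 xF else 0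
    | Sum.inr _, Sum.inl _ => 0
    | Sum.inr i, Sum.inr j => if j.1 = yI then Y.M a i.1 yF else Y.M a i.1 j.1

/-- The finite slice `w[i..j)` of a biinfinite word. -/
def bpre (w : ℤ → A) (i j : ℤ) : List A :=
  (List.range (j - i).toNat).map (fun k => w (i + k))

/-- A pair of states `(p,q)` is activated by the biinfinite word `w` if for
all `i₀ ≤ j₀` there are `i ≤ i₀` and `j ≥ j₀` with `M(w[i..j))_{p,q} ≠ 0`. -/
def BActivated (𝒜 : WA A S) (w : ℤ → A) (p q : 𝒜.Q) : Prop :=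
  ∀ i₀ j₀ : ℤ, i₀ ≤ j₀ → ∃ i ≤ i₀, ∃ j, j₀ ≤ j ∧ Mword 𝒜 (bpre w i j) p q ≠ 0

/-- The bidiverging behavior
`𝒜(w,i,n) = Σ_{(p,q) activated} I(p)·M(w[i..i+n))_{p,q}·F(q)`. -/
noncomputable def bdivB (𝒜 : WA A S) (w : ℤ → A) (i : ℤ) (n : ℕ) : S :=
  ∑ p : 𝒜.Q × 𝒜.Q,
    if BActivated 𝒜 w p.1 p.2 then
      𝒜.I p.1 * Mword 𝒜 (bpre w i (i + n)) p.1 p.2 * 𝒜.F p.2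
    else 0

/-- `χ_ζ(w,x) = 1` iff arbitrarily long slices of `w` have nonzero coefficient. -/
noncomputable def chiZ (w : ℤ → A) (x : List A → S) : S :=
  if ∀ i₀ j₀ : ℤ, i₀ ≤ j₀ → ∃ i ≤ i₀, ∃ j, j₀ ≤ j ∧ x (bpre w i j) ≠ 0 then 1 else 0

/-- `s^ζ(w,i,n) = s*(w[i..i+n))·χ_ζ(w,s*)`. -/
noncomputable def zetaPS (s : List A → S) : (ℤ → A) → ℤ → ℕ → S :=
  fun w i n => cstar s (bpre w i (i + n)) * chiZ w (cstar s)

/-- The conjoin `(x ⋆ m ⋆ y)(w,i,n) = (x*·m·y*)(w[i..i+n))·χ_ζ(w,x*·m·y*)`. -/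
noncomputable def conjoin3PS (x m y : List A → S) : (ℤ → A) → ℤ → ℕ → S :=
  fun w i n =>
    cmul (cstar x) (cmul m (cstar y)) (bpre w i (i + n)) *
      chiZ w (cmul (cstar x) (cmul m (cstar y)))

/-- `Rat^ζ(S,A)`: the smallest set of bidiverging power series closed under
finite sums and left/right scalar multiplication containing all `x ⋆ m ⋆ y`
and `z^ζ` for proper rational `x`, `m`, `y`, `z`. -/
inductive IsRatZeta : ((ℤ → A) → ℤ → ℕ → S) → Prop
  | zero : IsRatZeta (fun _ _ _ => 0)
  | add {p q : (ℤ → A) → ℤ → ℕ → S} :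
      IsRatZeta p → IsRatZeta q → IsRatZeta (fun w i n => p w i n + q w i n)
  | smul_left (s : S) {p : (ℤ → A) → ℤ → ℕ → S} :
      IsRatZeta p → IsRatZeta (fun w i n => s * p w i n)
  | smul_right (s : S) {p : (ℤ → A) → ℤ → ℕ → S} :
      IsRatZeta p → IsRatZeta (fun w i n => p w i n * s)
  | conjoin {x m y : List A → S} :
      IsRat x → x [] = 0 → IsRat m → m [] = 0 → IsRat y → y [] = 0 →
      IsRatZeta (conjoin3PS x m y)
  | zeta {z : List A → S} : IsRat z → z [] = 0 → IsRatZeta (zetaPS z)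

/-- The conjoin `X ⋆ M̂ ⋆ Y` of three normalized automata: the roll of `X`
(loopback `xI`), the middle of `M̂`, and the roll of `Y` (loopback `yI`), with
the edges of `M̂` leaving `mI` re-sourced at `xI`, the edges of `M̂` entering
`mF` re-targeted at `yI`, and direct `mI → mF` edges becoming `xI → yI`. -/
def conjoin3WA (X : WA A S) (xI xF : X.Q) (Mh : WA A S) (mI mF : Mh.Q)
    (Y : WA A S) (yI yF : Y.Q) : WA A S where
  Q := {i : X.Q // i ≠ xF} ⊕ ({k : Mh.Q // k ≠ mI ∧ k ≠ mF} ⊕ {j : Y.Q // j ≠ yF})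
  I := Sum.elim (fun i => if i.1 = xI then 1 else 0) (fun _ => 0)
  F := Sum.elim (fun _ => 0) (Sum.elim (fun _ => 0) (fun j => if j.1 = yI then 1 else 0))
  M := fun a => Matrix.of fun p q =>
    match p, q with
    | Sum.inl i, Sum.inl j => if j.1 = xI then X.M a i.1 xF else X.M a i.1 j.1
    | Sum.inl i, Sum.inr (Sum.inl k) => if i.1 = xI then Mh.M a mI k.1 else 0
    | Sum.inl i, Sum.inr (Sum.inr j) =>
        if i.1 = xI ∧ j.1 = yI then Mh.M a mI mF else 0
    | Sum.inr (Sum.inl _), Sum.inl _ => 0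
    | Sum.inr (Sum.inl k), Sum.inr (Sum.inl l) => Mh.M a k.1 l.1
    | Sum.inr (Sum.inl k), Sum.inr (Sum.inr j) => if j.1 = yI then Mh.M a k.1 mF else 0
    | Sum.inr (Sum.inr _), Sum.inl _ => 0
    | Sum.inr (Sum.inr _), Sum.inr (Sum.inl _) => 0
    | Sum.inr (Sum.inr i), Sum.inr (Sum.inr j) =>
        if j.1 = yI then Y.M a i.1 yF else Y.M a i.1 j.1


section AuxLoopback

lemma Mword_nil' (𝒜 : WA A S) : Mword 𝒜 ([] : List A) = 1 := by simp [Mword]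

lemma Mword_cons' (𝒜 : WA A S) (a : A) (w : List A) :
    Mword 𝒜 (a :: w) = 𝒜.M a * Mword 𝒜 w := by
  simp [Mword]

lemma convB_of_indicator (𝒜 : WA A S) (p q : 𝒜.Q)
    (hI : ∀ i, 𝒜.I i = if i = p then 1 else 0)
    (hF : ∀ f, 𝒜.F f = if f = q then 1 else 0) (w : List A) :
    convB 𝒜 w = Mword 𝒜 w p q := by
  simp [convB, hI, hF, ite_mul, mul_ite, Finset.sum_ite_eq']

variable (L : WA A S) (q₀ : L.Q)

lemma sum_unrollQ (f : (unroll L q₀).Q → S) :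
    ∑ q, f q = (∑ j : L.Q, f (Sum.inl j)) + f (Sum.inr ()) := by
  show ∑ q : L.Q ⊕ Unit, f q = _
  exact (Fintype.sum_sum_type f).trans (by simp)

lemma Mword_unroll_inr (u : List A) (hu : u ≠ []) (q : (unroll L q₀).Q) :
    Mword (unroll L q₀) u (Sum.inr ()) q = 0 := by
  cases u with
  | nil => exact absurd rfl hu
  | cons a u' =>
    rw [Mword_cons']
    erw [Matrix.mul_apply]
    apply Finset.sum_eq_zero
    intro j _
    have : (unroll L q₀).M a (Sum.inr ()) j = 0 := by
      cases j <;> rfl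
    rw [this, zero_mul]

lemma convB_loopback_eq (hL : IsLoopbackAt L q₀) (w : List A) :
    convB L w = Mword L w q₀ q₀ :=
  convB_of_indicator L q₀ q₀ hL.1 hL.2 w

lemma convB_unroll_eq (w : List A) :
    convB (unroll L q₀) w = Mword (unroll L q₀) w (Sum.inl q₀) (Sum.inr ()) := by
  apply convB_of_indicator
  · rintro (i | ⟨⟩) <;> simp [unroll]
  · rintro (f | ⟨⟩) <;> simp [unroll]

lemma convB_unroll_nil : convB (unroll L q₀) [] = 0 := by
  rw [convB_unroll_eq, Mword_nil']
  exact Matrix.one_apply_ne (by simp)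

lemma unroll_key (w : List A) : ∀ (a : A) (i : L.Q),
    Mword L (a :: w) i q₀ =
      ∑ k ∈ Finset.range (w.length + 1),
        Mword (unroll L q₀) ((a :: w).take (k + 1)) (Sum.inl i) (Sum.inr ()) *
          Mword L ((a :: w).drop (k + 1)) q₀ q₀ := by
  induction w with
  | nil =>
    intro a i
    simp [Mword_cons', Mword_nil', Matrix.mul_apply, Matrix.one_apply,
      mul_ite, mul_one, mul_zero, Finset.sum_ite_eq', unroll]
  | cons b w' ih =>
    intro a i
    have split_sum : ∀ f : L.Q → S, ∑ j, f j
        = (∑ j, if j = q₀ then 0 else f j) + f q₀ := by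
      intro f
      have h1 : ∀ j : L.Q, f j = (if j = q₀ then 0 else f j) + (if j = q₀ then f j else 0) := by
        intro j; by_cases h : j = q₀ <;> simp [h]
      rw [Finset.sum_congr rfl (fun j _ => h1 j), Finset.sum_add_distrib,
        Finset.sum_ite_eq' Finset.univ q₀ f]
      simp
    -- LHS
    rw [Mword_cons' L a (b :: w'), Matrix.mul_apply, split_sum]
    -- RHS : peel off k = 0
    simp only [List.length_cons]
    rw [Finset.sum_range_succ']
    congr 1
    · -- the k ≥ 1 part equals ∑_{j ≠ q₀} L.M a i j * Mword L (b::w') j q₀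
      have hT : ∀ k, Mword (unroll L q₀) ((a :: b :: w').take (k + 1 + 1))
            (Sum.inl i) (Sum.inr ()) * Mword L ((a :: b :: w').drop (k + 1 + 1)) q₀ q₀
          = ∑ j : L.Q, (if j = q₀ then 0 else L.M a i j) *
              (Mword (unroll L q₀) ((b :: w').take (k + 1)) (Sum.inl j) (Sum.inr ()) *
                Mword L ((b :: w').drop (k + 1)) q₀ q₀) := by
        intro k
        have htake : (a :: b :: w').take (k + 1 + 1) = a :: (b :: w').take (k + 1) := rfl
        have hdrop : (a :: b :: w').drop (k + 1 + 1) = (b :: w').drop (k + 1) := rfl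
        rw [htake, hdrop, Mword_cons']
        erw [Matrix.mul_apply]
        rw [sum_unrollQ]
        erw [Mword_unroll_inr L q₀ ((b :: w').take (k + 1)) (by simp)]
        rw [mul_zero, add_zero, Finset.sum_mul]
        apply Finset.sum_congr rfl
        intro j _
        have hM : (unroll L q₀).M a (Sum.inl i) (Sum.inl j)
            = if j = q₀ then 0 else L.M a i j := rfl
        rw [hM, mul_assoc]
      rw [Finset.sum_congr rfl (fun k _ => hT k), Finset.sum_comm]
      apply Finset.sum_congr rfl
      intro j _
      by_cases hj : j = q₀
      · simp [hj]
      · simp only [hj, if_false]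
        rw [← Finset.mul_sum]
        congr 1
        rw [ih b j]
    · -- k = 0 term
      have htake : (a :: b :: w').take (0 + 1) = [a] := rfl
      have hdrop : (a :: b :: w').drop (0 + 1) = b :: w' := rfl
      rw [htake, hdrop]
      have h1 : Mword (unroll L q₀) [a] (Sum.inl i) (Sum.inr ()) = L.M a i q₀ := by
        simp [Mword_cons', Mword_nil', unroll]
      rw [h1]

lemma cpow_eq_zero_of_lt (x : List A → S) (hx : x [] = 0) :
    ∀ (k : ℕ) (u : List A), u.length < k → cpow x k u = 0 := by
  intro k
  induction k with
  | zero => intro u hu; omega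
  | succ k ih =>
    intro u hu
    simp only [cpow, cmul]
    apply Finset.sum_eq_zero
    intro j hj
    simp only [Finset.mem_range] at hj
    rcases Nat.eq_zero_or_pos j with hj0 | hj0
    · subst hj0; simp [hx]
    · have hl : (u.drop j).length < k := by
        rw [List.length_drop]; omega
      rw [ih _ hl, mul_zero]

lemma cstar_cons (x : List A → S) (hx : x [] = 0) (a : A) (w : List A) :
    cstar x (a :: w) = ∑ k ∈ Finset.range (w.length + 1),
      x ((a :: w).take (k + 1)) * cstar x ((a :: w).drop (k + 1)) := by
  simp only [cstar, List.length_cons]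
  rw [Finset.sum_range_succ']
  have h0 : cpow x 0 (a :: w) = 0 := rfl
  rw [h0, add_zero]
  have hk : ∀ k, cpow x (k + 1) (a :: w)
      = ∑ j ∈ Finset.range (w.length + 1),
          x ((a :: w).take (j + 1)) * cpow x k ((a :: w).drop (j + 1)) := by
    intro k
    simp only [cpow, cmul, List.length_cons]
    rw [Finset.sum_range_succ']
    simp [hx]
  rw [Finset.sum_congr rfl (fun k _ => hk k), Finset.sum_comm]
  apply Finset.sum_congr rfl
  intro j hj
  simp only [Finset.mem_range] at hj
  rw [← Finset.mul_sum]
  congr 1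
  have hdlen : ((a :: w).drop (j + 1)).length = w.length - j := by
    rw [List.length_drop, List.length_cons]; omega
  rw [hdlen]
  refine (Finset.sum_subset (Finset.range_subset_range.mpr (by omega)) ?_).symm
  intro k hk hk'
  simp only [Finset.mem_range] at hk hk'
  exact cpow_eq_zero_of_lt x hx k _ (by rw [hdlen]; omega)

end AuxLoopback

/-- the converging behavior of a loopback automaton is the star
of the behavior of its unroll. -/
theorem loopback_convB_eq_star_unroll (A S : Type) [Semiring S] (L : WA A S)
    (q₀ : L.Q) (hL : IsLoopbackAt L q₀) :
    ∀ w : List A, convB L w = cstar (convB (unroll L q₀)) w := by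
  have hnil : ∀ w : List A, w = [] → convB L w = cstar (convB (unroll L q₀)) w := by
    intro w hw; subst hw
    rw [convB_loopback_eq L q₀ hL, Mword_nil', Matrix.one_apply_eq]
    simp [cstar, cpow, cone]
  have main : ∀ (n : ℕ) (w : List A), w.length ≤ n →
      convB L w = cstar (convB (unroll L q₀)) w := by
    intro n
    induction n with
    | zero =>
      intro w hw
      exact hnil w (List.length_eq_zero_iff.mp (Nat.le_zero.mp hw))
    | succ n ih =>
      intro w hw
      cases w with
      | nil => exact hnil [] rfl
      | cons a w' =>
        rw [convB_loopback_eq L q₀ hL, unroll_key L q₀ w' a q₀,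
          cstar_cons _ (convB_unroll_nil L q₀) a w']
        apply Finset.sum_congr rfl
        intro k hk
        rw [convB_unroll_eq L q₀ ((a :: w').take (k + 1))]
        congr 1
        have hlen : ((a :: w').drop (k + 1)).length ≤ n := by
          simp only [List.length_cons, Nat.succ_le_succ_iff] at hw
          simp [List.length_drop]
          omega
        exact (convB_loopback_eq L q₀ hL _).symm.trans (ih _ hlen)
  exact fun w => main w.length w le_rfl
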